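/- For every n ≥ 1, the tensor rank of |W⟩^{⊗n}, regarded as a tripartite vector in (ℂ²)^{⊗n}⊗(ℂ²)^{⊗n}⊗(ℂ²)^{⊗n} with copies regrouped by party, is at least 2^{n+1} − 1. -/

import Mathlib

open TensorProduct

/-- Tripartite tensor rank: minimal number of product vectors summing to `ψ`. -/
noncomputable def tRank {A B C : Type*} [AddCommGroup A] [Module ℂ A]
    [AddCommGroup B] [Module ℂ B] [AddCommGroup C] [Module ℂ C]
    (ψ : A ⊗[ℂ] (B ⊗[ℂ] C)) : ℕ :=
  sInf {r | ∃ (a : Fin r → A) (b : Fin r → B) (c : Fin r → C),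
    ψ = ∑ i, a i ⊗ₜ[ℂ] (b i ⊗ₜ[ℂ] c i)}

/-- `(ℂ²)^{⊗n}`, realized as functions on `n`-bit strings. -/
abbrev V (n : ℕ) : Type := (Fin n → Bool) → ℂ

/-- the computational-basis vector `|s⟩` of `n` qubits. -/
noncomputable def qb {n : ℕ} (s : Fin n → Bool) : V n := Pi.single s 1

/-- `W^{⊗n}` regrouped party-wise: in copy `k` the excitation goes to party `f k`. -/
noncomputable def Wn (n : ℕ) : V n ⊗[ℂ] (V n ⊗[ℂ] V n) :=
  ∑ f : Fin n → Fin 3,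
    qb (fun k => decide (f k = 0)) ⊗ₜ[ℂ]
      (qb (fun k => decide (f k = 1)) ⊗ₜ[ℂ] qb (fun k => decide (f k = 2)))

/-- `GHZ^{⊗n}` regrouped party-wise: `∑ₓ |x⟩|x⟩|x⟩`. -/
noncomputable def GHZn (n : ℕ) : V n ⊗[ℂ] (V n ⊗[ℂ] V n) :=
  ∑ x : Fin n → Bool, qb x ⊗ₜ[ℂ] (qb x ⊗ₜ[ℂ] qb x)

namespace WnAux

variable {n : ℕ}
noncomputable def E (x y z : Fin n → Bool) :
    (V n) ⊗[ℂ] ((V n) ⊗[ℂ] (V n)) →ₗ[ℂ] ℂ :=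
  TensorProduct.lift ((LinearMap.proj x : V n →ₗ[ℂ] ℂ).smulRight
    (TensorProduct.lift ((LinearMap.proj y : V n →ₗ[ℂ] ℂ).smulRight
      (LinearMap.proj z : V n →ₗ[ℂ] ℂ))))
@[simp] lemma E_tmul (x y z : Fin n → Bool) (u v w : V n) :
    E x y z (u ⊗ₜ[ℂ] (v ⊗ₜ[ℂ] w)) = u x * (v y * w z) := by
  simp [E, smul_eq_mul]
def C3 (x y z : Fin n → Bool) : Prop :=
  ∀ k, (x k && y k) = false ∧ z k = !(x k || y k)
instance (x y z : Fin n → Bool) : Decidable (C3 x y z) :=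
  inferInstanceAs (Decidable (∀ _, _ ∧ _))
noncomputable def w (x y z : Fin n → Bool) : ℂ := if C3 x y z then 1 else 0

lemma qb_apply (s t : Fin n → Bool) : qb s t = if t = s then 1 else 0 := by
  rw [qb, Pi.single_apply]

lemma E_Wn (x y z : Fin n → Bool) : E x y z (Wn n) = w x y z := by
  classical
  rw [Wn, map_sum]
  have hterm : ∀ f : Fin n → Fin 3,
      E x y z (qb (fun k => decide (f k = 0)) ⊗ₜ[ℂ]
        (qb (fun k => decide (f k = 1)) ⊗ₜ[ℂ] qb (fun k => decide (f k = 2))))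
      = if ((x = fun k => decide (f k = 0)) ∧ (y = fun k => decide (f k = 1))
            ∧ (z = fun k => decide (f k = 2))) then 1 else 0 := by
    intro f
    rw [E_tmul, qb_apply, qb_apply, qb_apply]
    split_ifs with h1 h2 h3 <;> simp_all
  simp only [hterm]
  by_cases hC : C3 x y z
  · rw [w, if_pos hC]
    set f₀ : Fin n → Fin 3 := fun k => if x k then 0 else if y k then 1 else 2 with hf₀
    rw [Finset.sum_eq_single f₀]
    · rw [if_pos]
      have key : ∀ u v t : Bool, (u && v) = false → t = !(u || v) →
          (u = decide ((if u then (0:Fin 3) else if v then 1 else 2) = 0)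
           ∧ v = decide ((if u then (0:Fin 3) else if v then 1 else 2) = 1)
           ∧ t = decide ((if u then (0:Fin 3) else if v then 1 else 2) = 2)) := by decide
      refine ⟨funext fun k => ?_, funext fun k => ?_, funext fun k => ?_⟩
      · exact (key _ _ _ (hC k).1 (hC k).2).1
      · exact (key _ _ _ (hC k).1 (hC k).2).2.1
      · exact (key _ _ _ (hC k).1 (hC k).2).2.2
    · intro f _ hne
      rw [if_neg]
      rintro ⟨hx, hy, hz⟩
      apply hne
      funext k
      have key2 : ∀ g : Fin 3,
          (if decide (g = 0) then (0:Fin 3) else if decide (g = 1) then 1 else 2) = g := by decide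
      have hxk := congrFun hx k
      have hyk := congrFun hy k
      rw [hf₀]
      simp only [hxk, hyk]
      exact (key2 (f k)).symm
    · intro hmem; exact absurd (Finset.mem_univ f₀) hmem
  · rw [w, if_neg hC]
    apply Finset.sum_eq_zero
    intro f _
    rw [if_neg]
    rintro ⟨hx, hy, hz⟩
    apply hC
    intro k
    have key3 : ∀ g : Fin 3, (decide (g = 0) && decide (g = 1)) = false
        ∧ decide (g = 2) = !(decide (g = 0) || decide (g = 1)) := by decide
    rw [congrFun hx k, congrFun hy k, congrFun hz k]
    exact key3 (f k)


variable {n : ℕ}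

lemma C3_iff (x y z : Fin n → Bool) :
    C3 x y z ↔ (∀ k, (y k && z k) = false) ∧ x = fun k => !(y k || z k) := by
  have key : ∀ u v t : Bool, ((u && v) = false ∧ t = !(u || v))
      ↔ ((v && t) = false ∧ u = !(v || t)) := by decide
  constructor
  · intro h
    refine ⟨fun k => ((key _ _ _).1 (h k)).1, funext fun k => ((key _ _ _).1 (h k)).2⟩
  · rintro ⟨h1, h2⟩ k
    exact (key _ _ _).2 ⟨h1 k, congrFun h2 k⟩

lemma sum_w (d : V n) (y z : Fin n → Bool) :
    ∑ x, d x * w x y z =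
      if (∀ k, (y k && z k) = false) then d (fun k => !(y k || z k)) else 0 := by
  classical
  by_cases hyz : ∀ k, (y k && z k) = false
  · rw [if_pos hyz, Finset.sum_eq_single (fun k => !(y k || z k))]
    · rw [w, if_pos ((C3_iff _ y z).2 ⟨hyz, rfl⟩), mul_one]
    · intro x _ hne
      rw [w, if_neg, mul_zero]
      intro hC; exact hne ((C3_iff x y z).1 hC).2
    · intro hmem; exact absurd (Finset.mem_univ _) hmem
  · rw [if_neg hyz]
    apply Finset.sum_eq_zero
    intro x _
    rw [w, if_neg, mul_zero]
    intro hC; exact hyz ((C3_iff x y z).1 hC).1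

noncomputable def pairL (u : V n) : V n →ₗ[ℂ] ℂ :=
  ∑ x : Fin n → Bool, u x • (LinearMap.proj x : V n →ₗ[ℂ] ℂ)

lemma pairL_apply (u d : V n) : pairL u d = ∑ x, d x * u x := by
  rw [pairL, LinearMap.sum_apply]
  exact Finset.sum_congr rfl fun x _ => by
    rw [LinearMap.smul_apply, LinearMap.proj_apply, smul_eq_mul, mul_comm]

lemma pairL_single (d : V n) (x : Fin n → Bool) :
    pairL d (Pi.single x 1) = d x := by
  classical
  rw [pairL_apply, Finset.sum_eq_single x]
  · simp
  · intro y _ hne; rw [Pi.single_apply, if_neg hne, zero_mul]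
  · intro hmem; exact absurd (Finset.mem_univ _) hmem

lemma span_eq_top_of_ker {ι : Type*} (v : ι → V n)
    (h : ∀ d : V n, (∀ i, (∑ x, d x * v i x) = 0) → d = 0) :
    Submodule.span ℂ (Set.range v) = ⊤ := by
  classical
  by_contra hne
  set p := Submodule.span ℂ (Set.range v) with hp
  obtain ⟨x₀, hx₀⟩ : ∃ x₀, x₀ ∉ p := by
    by_contra hall; push_neg at hall; exact hne (Submodule.eq_top_iff'.2 hall)
  have hq : Submodule.Quotient.mk (p := p) x₀ ≠ 0 := by
    simpa [Submodule.Quotient.mk_eq_zero] using hx₀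
  obtain ⟨φ, hφ⟩ : ∃ φ : Module.Dual ℂ (V n ⧸ p), φ (Submodule.Quotient.mk x₀) ≠ 0 := by
    by_contra hall; push_neg at hall
    exact hq ((Module.forall_dual_apply_eq_zero_iff ℂ _).1 hall)
  set f : V n →ₗ[ℂ] ℂ := φ.comp p.mkQ with hfdef
  set d : V n := fun x => f (Pi.single x 1) with hd
  have hf : ∀ u : V n, f u = ∑ x, d x * u x := by
    intro u
    have hu : u = ∑ x, u x • (Pi.single x 1 : V n) := by
      conv_lhs => rw [← Finset.univ_sum_single u]
      exact Finset.sum_congr rfl fun x _ => by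
        rw [← Pi.single_smul, smul_eq_mul, mul_one]
    calc f u = f (∑ x, u x • (Pi.single x 1 : V n)) := by rw [← hu]
      _ = ∑ x, u x • f (Pi.single x 1) := by rw [map_sum]; simp
      _ = ∑ x, d x * u x := Finset.sum_congr rfl fun x _ => by rw [smul_eq_mul, mul_comm]
  have hdz : d = 0 := by
    apply h d
    intro i
    have hv : v i ∈ p := Submodule.subset_span ⟨i, rfl⟩
    have h0 : f (v i) = 0 := by
      rw [hfdef]
      simp only [LinearMap.comp_apply, Submodule.mkQ_apply]
      rw [(Submodule.Quotient.mk_eq_zero p).2 hv, map_zero]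
    rw [← hf (v i)]; exact h0
  apply hφ
  have : f x₀ = 0 := by rw [hf, hdz]; simp
  simpa [hfdef] using this


variable {n : ℕ}

lemma finrank_V : Module.finrank ℂ (V n) = 2 ^ n := by
  simp [Module.finrank_pi]

lemma exists_good_d {ι : Type*} [Fintype ι] [DecidableEq ι] (v : ι → V n) (e : V n)
    (hspan : Submodule.span ℂ (Set.range v) = ⊤) (he : e ≠ 0) :
    ∃ (d : V n) (I : Finset ι), (∑ x, d x * e x) ≠ 0 ∧ 2 ^ n - 1 ≤ I.card ∧
      ∀ i ∈ I, (∑ x, d x * v i x) = 0 := by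
  classical
  obtain ⟨t, hsub, hspan', hind⟩ := exists_linearIndependent ℂ (Set.range v)
  rw [hspan] at hspan'
  have htfin : t.Finite := hind.finite
  haveI : Fintype t := htfin.fintype
  set tf : Finset (V n) := t.toFinset with htf
  have hcoe : (tf : Set (V n)) = t := Set.coe_toFinset t
  have hcard : tf.card = 2 ^ n := by
    have h1 : Module.finrank ℂ (Submodule.span ℂ t) = tf.card :=
      finrank_span_set_eq_card hind
    rw [hspan', finrank_top, finrank_V] at h1
    exact h1.symm
  have he_mem : e ∈ Submodule.span ℂ (tf : Set (V n)) := by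
    rw [hcoe, hspan']; trivial
  obtain ⟨g, -, hg⟩ := Submodule.mem_span_finset.1 he_mem
  obtain ⟨u₀, hu₀mem, hu₀⟩ : ∃ u₀ ∈ tf, g u₀ ≠ 0 := by
    by_contra hall; push_neg at hall
    apply he
    rw [← hg]
    exact Finset.sum_eq_zero fun u hu => by rw [hall u hu, zero_smul]
  set t' : Finset (V n) := tf.erase u₀ with ht'
  have hcard' : t'.card = 2 ^ n - 1 := by
    rw [ht', Finset.card_erase_of_mem hu₀mem, hcard]
  obtain ⟨d, hd0, hde⟩ : ∃ d : V n,
      (∀ u ∈ t', (∑ x, d x * u x) = 0) ∧ (∑ x, d x * e x) ≠ 0 := by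
    by_contra hcon; push_neg at hcon
    set Ψ : V n →ₗ[ℂ] ({u // u ∈ t'} → ℂ) :=
      LinearMap.pi (fun u : {u // u ∈ t'} => pairL u.1) with hΨ
    have hker : ∀ dd : V n, Ψ dd = 0 → dd = 0 := by
      intro dd hdd
      have horth : ∀ u ∈ t', (∑ x, dd x * u x) = 0 := by
        intro u hu
        have := congrFun hdd ⟨u, hu⟩
        rw [hΨ] at this
        simpa [pairL_apply] using this
      have he0 : (∑ x, dd x * e x) = 0 := hcon dd horth
      have hu₀0 : (∑ x, dd x * u₀ x) = 0 := by
        have hexp : (∑ x, dd x * e x) = ∑ u ∈ tf, g u * (∑ x, dd x * u x) := by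
          conv_lhs => rw [← hg]
          calc ∑ x, dd x * (∑ u ∈ tf, g u • u) x
              = ∑ x, ∑ u ∈ tf, dd x * (g u * u x) := by
                refine Finset.sum_congr rfl fun x _ => ?_
                rw [Finset.sum_apply, Finset.mul_sum]
                exact Finset.sum_congr rfl fun u _ => by rw [Pi.smul_apply, smul_eq_mul]
            _ = ∑ u ∈ tf, ∑ x, dd x * (g u * u x) := Finset.sum_comm
            _ = ∑ u ∈ tf, g u * ∑ x, dd x * u x := by
                refine Finset.sum_congr rfl fun u _ => ?_
                rw [Finset.mul_sum]
                exact Finset.sum_congr rfl fun x _ => by ring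
        have hsingle : ∑ u ∈ tf, g u * (∑ x, dd x * u x) = g u₀ * (∑ x, dd x * u₀ x) := by
          apply Finset.sum_eq_single u₀
          · intro u hu hne
            rw [horth u (Finset.mem_erase.2 ⟨hne, hu⟩), mul_zero]
          · intro hmem; exact absurd hu₀mem hmem
        have h0 : g u₀ * (∑ x, dd x * u₀ x) = 0 := by
          rw [← hsingle, ← hexp]; exact he0
        rcases mul_eq_zero.1 h0 with h | h
        · exact absurd h hu₀
        · exact h
      have hall : ∀ u ∈ tf, (∑ x, dd x * u x) = 0 := by
        intro u hu
        by_cases hEq : u = u₀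
        · rw [hEq]; exact hu₀0
        · exact horth u (Finset.mem_erase.2 ⟨hEq, hu⟩)
      -- dd kills span t = ⊤
      have hspan0 : ∀ u, pairL dd u = 0 := by
        intro u
        have humem : u ∈ Submodule.span ℂ t := by rw [hspan']; trivial
        induction humem using Submodule.span_induction with
        | mem w hw =>
          have hw' : w ∈ tf := by rw [← hcoe] at hw; exact hw
          rw [pairL_apply]
          have := hall w hw'
          calc ∑ x, w x * dd x = ∑ x, dd x * w x := Finset.sum_congr rfl fun x _ => mul_comm _ _
            _ = 0 := this
        | zero => rw [map_zero]
        | add w₁ w₂ _ _ h1 h2 => rw [map_add, h1, h2, add_zero]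
        | smul c w _ h1 => rw [map_smul, h1, smul_zero]
      funext x
      have := hspan0 (Pi.single x 1)
      rw [pairL_single] at this
      exact this
    have hinj : Function.Injective Ψ :=
      LinearMap.ker_eq_bot.1 (LinearMap.ker_eq_bot'.2 hker)
    have hle := LinearMap.finrank_le_finrank_of_injective hinj
    rw [finrank_V, Module.finrank_pi] at hle
    have : Fintype.card {u // u ∈ t'} = 2 ^ n - 1 := by
      rw [← hcard']
      exact Fintype.card_coe t'
    rw [this] at hle
    have hN : 1 ≤ 2 ^ n := Nat.one_le_two_pow
    omega
  have hmemrange : ∀ u ∈ t', ∃ i, v i = u := by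
    intro u hu
    have : u ∈ t := by
      rw [← hcoe]; exact Finset.mem_of_mem_erase hu
    exact hsub this
  set I : Finset ι := t'.attach.image
      (fun u => (hmemrange u.1 u.2).choose) with hI
  refine ⟨d, I, hde, ?_, ?_⟩
  · rw [hI]
    rw [Finset.card_image_of_injOn, Finset.card_attach, hcard']
    intro u1 _ u2 _ heq
    have h1 := (hmemrange u1.1 u1.2).choose_spec
    have h2 := (hmemrange u2.1 u2.2).choose_spec
    apply Subtype.ext
    rw [← h1, ← h2]
    exact congrArg v heq
  · intro i hi
    rw [hI] at hi
    obtain ⟨u, _, rfl⟩ := Finset.mem_image.1 hi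
    rw [(hmemrange u.1 u.2).choose_spec]
    exact hd0 u.1 u.2


lemma main (r : ℕ) (a b c : Fin r → V n)
    (h : ∀ x y z, (∑ i, a i x * (b i y * c i z)) = w x y z) :
    2 ^ (n + 1) - 1 ≤ r := by
  classical
  have hN1 : 1 ≤ 2 ^ n := Nat.one_le_two_pow
  have hM : ∀ (d : V n) (y z : Fin n → Bool),
      (∑ i, (∑ x, d x * a i x) * (b i y * c i z)) =
      (if (∀ k, (y k && z k) = false) then d (fun k => !(y k || z k)) else 0) := by
    intro d y z
    rw [← sum_w d y z]
    calc ∑ i, (∑ x, d x * a i x) * (b i y * c i z)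
        = ∑ i, ∑ x, d x * (a i x * (b i y * c i z)) := by
          refine Finset.sum_congr rfl fun i _ => ?_
          rw [Finset.sum_mul]
          exact Finset.sum_congr rfl fun x _ => by ring
      _ = ∑ x, ∑ i, d x * (a i x * (b i y * c i z)) := Finset.sum_comm
      _ = ∑ x, d x * w x y z := by
          refine Finset.sum_congr rfl fun x _ => ?_
          rw [← Finset.mul_sum, h x y z]
  have hker : ∀ d : V n, (∀ i, (∑ x, d x * a i x) = 0) → d = 0 := by
    intro d hd
    have hz : ∀ z : Fin n → Bool, d (fun k => !(z k)) = 0 := by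
      intro z
      have h2 := hM d (fun _ => false) z
      rw [Finset.sum_eq_zero (fun i _ => by rw [hd i, zero_mul])] at h2
      simpa using h2.symm
    funext u
    have := hz (fun k => !(u k))
    simpa using this
  have hspan := span_eq_top_of_ker a hker
  have he : (Pi.single (fun _ => false) 1 : V n) ≠ 0 := by
    intro h0
    have := congrFun h0 (fun _ => false)
    simp at this
  obtain ⟨d, I, hde, hIcard, hIzero⟩ :=
    exists_good_d a (Pi.single (fun _ => false) 1) hspan he
  have hd0 : d (fun _ => false) ≠ 0 := by
    intro h0
    apply hde
    rw [Finset.sum_eq_single (fun _ => false : Fin n → Bool)]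
    · simp [Pi.single_eq_same, h0]
    · intro x _ hne; rw [Pi.single_apply, if_neg hne, mul_zero]
    · intro hmem; exact absurd (Finset.mem_univ _) hmem
  set Md : (Fin n → Bool) → (Fin n → Bool) → ℂ := fun y z =>
    if (∀ k, (y k && z k) = false) then d (fun k => !(y k || z k)) else 0 with hMd
  set L : V n →ₗ[ℂ] V n :=
    { toFun := fun u z => ∑ y, u y * Md y z
      map_add' := by
        intro u v'
        funext z
        simp only [Pi.add_apply]
        rw [← Finset.sum_add_distrib]
        exact Finset.sum_congr rfl fun y _ => by ring
      map_smul' := by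
        intro m u
        funext z
        simp only [Pi.smul_apply, smul_eq_mul, RingHom.id_apply]
        rw [Finset.mul_sum]
        exact Finset.sum_congr rfl fun y _ => by ring } with hL
  have hb2 : ∀ p q : Bool, ((p && !q) = false) ↔ (p = true → q = true) := by decide
  have hBool : ∀ p q : Bool, (!(p || !q)) = (q && !p) := by decide
  have hLinj : Function.Injective L := by
    apply LinearMap.ker_eq_bot.1
    apply LinearMap.ker_eq_bot'.2
    intro u hu
    have key : ∀ m : ℕ, ∀ y₀ : Fin n → Bool,
        (Finset.univ.filter (fun k => y₀ k = true)).card = m → u y₀ = 0 := by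
      intro m
      induction m using Nat.strong_induction_on with
      | _ m IH =>
        intro y₀ hm
        have h0 : ∑ y, u y * Md y (fun k => !(y₀ k)) = 0 := by
          exact congrFun hu (fun k => !(y₀ k))
        have hMdy : ∀ y : Fin n → Bool, Md y (fun k => !(y₀ k)) =
            if (∀ k, y k = true → y₀ k = true) then d (fun k => y₀ k && !(y k)) else 0 := by
          intro y
          simp only [hMd]
          by_cases hc : ∀ k, y k = true → y₀ k = true
          · rw [if_pos, if_pos hc]
            · congr 1
              funext k
              exact hBool (y k) (y₀ k)
            · intro k; exact (hb2 (y k) (y₀ k)).2 (hc k)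
          · rw [if_neg, if_neg hc]
            intro hk
            exact hc fun k => (hb2 (y k) (y₀ k)).1 (hk k)
        rw [Finset.sum_congr rfl (fun y _ => by rw [hMdy y])] at h0
        simp only [mul_ite, mul_zero] at h0
        rw [← Finset.sum_filter] at h0
        have hy₀mem : y₀ ∈ Finset.univ.filter
            (fun y : Fin n → Bool => ∀ k, y k = true → y₀ k = true) :=
          Finset.mem_filter.2 ⟨Finset.mem_univ _, fun _ h => h⟩
        rw [← Finset.add_sum_erase _ _ hy₀mem] at h0
        have hdiag : (fun k => y₀ k && !(y₀ k)) = (fun _ => false : Fin n → Bool) := by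
          funext k; simp
        rw [hdiag] at h0
        have hrest : ∑ y ∈ (Finset.univ.filter
            (fun y : Fin n → Bool => ∀ k, y k = true → y₀ k = true)).erase y₀,
            u y * d (fun k => y₀ k && !(y k)) = 0 := by
          apply Finset.sum_eq_zero
          intro y hy
          obtain ⟨hne, hyf⟩ := Finset.mem_erase.1 hy
          have hle : ∀ k, y k = true → y₀ k = true := (Finset.mem_filter.1 hyf).2
          have hsubset : (Finset.univ.filter (fun k => y k = true)) ⊆
              (Finset.univ.filter (fun k => y₀ k = true)) := by
            intro k hk
            simp only [Finset.mem_filter, Finset.mem_univ, true_and] at hk ⊢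
            exact hle k hk
          have hne2 : (Finset.univ.filter (fun k => y k = true)) ≠
              (Finset.univ.filter (fun k => y₀ k = true)) := by
            intro hEq
            apply hne
            funext k
            by_cases hyk : y k = true
            · rw [hyk, hle k hyk]
            · have h0k : ¬ y₀ k = true := by
                intro h0k
                apply hyk
                have hmem : k ∈ Finset.univ.filter (fun k => y k = true) := by
                  rw [hEq]
                  exact Finset.mem_filter.2 ⟨Finset.mem_univ k, h0k⟩
                exact (Finset.mem_filter.1 hmem).2
              rw [Bool.not_eq_true] at hyk h0k
              rw [hyk, h0k]
          have hcl : (Finset.univ.filter (fun k => y k = true)).card < m := by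
            rw [← hm]
            exact Finset.card_lt_card (lt_of_le_of_ne hsubset hne2)
          rw [IH _ hcl y rfl, zero_mul]
        rw [hrest, add_zero] at h0
        rcases mul_eq_zero.1 h0 with h' | h'
        · exact h'
        · exact absurd h' hd0
    funext y₀
    exact key _ y₀ rfl
  set s' : Finset (Fin r) := Finset.univ \ I with hs'
  have hrange : LinearMap.range L ≤
      Submodule.span ℂ ((s'.image c : Finset (V n)) : Set (V n)) := by
    rintro w' ⟨u, rfl⟩
    have hexp : L u = ∑ i ∈ s', ((∑ x, d x * a i x) * (∑ y, u y * b i y)) • c i := by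
      funext z
      have h2 : ∀ y, Md y z = ∑ i, (∑ x, d x * a i x) * (b i y * c i z) := by
        intro y
        simp only [hMd]
        exact (hM d y z).symm
      have h1 : (L u) z = ∑ y, u y * Md y z := rfl
      rw [h1]
      calc ∑ y, u y * Md y z
          = ∑ y, ∑ i, u y * ((∑ x, d x * a i x) * (b i y * c i z)) := by
            refine Finset.sum_congr rfl fun y _ => ?_
            rw [h2 y, Finset.mul_sum]
        _ = ∑ i, ∑ y, u y * ((∑ x, d x * a i x) * (b i y * c i z)) := Finset.sum_comm
        _ = ∑ i, ((∑ x, d x * a i x) * (∑ y, u y * b i y)) * c i z := by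
            refine Finset.sum_congr rfl fun i _ => ?_
            rw [Finset.mul_sum, Finset.sum_mul]
            exact Finset.sum_congr rfl fun y _ => by ring
        _ = ∑ i ∈ s', ((∑ x, d x * a i x) * (∑ y, u y * b i y)) * c i z := by
            symm
            apply Finset.sum_subset (Finset.subset_univ s')
            intro i _ hi
            have hiI : i ∈ I := by
              by_contra hiI
              exact hi (Finset.mem_sdiff.2 ⟨Finset.mem_univ i, hiI⟩)
            rw [hIzero i hiI, zero_mul, zero_mul]
        _ = (∑ i ∈ s', ((∑ x, d x * a i x) * (∑ y, u y * b i y)) • c i) z := by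
            rw [Finset.sum_apply]
            exact Finset.sum_congr rfl fun i _ => by rw [Pi.smul_apply, smul_eq_mul]
    rw [hexp]
    apply Submodule.sum_mem
    intro i hi
    exact Submodule.smul_mem _ _
      (Submodule.subset_span (Finset.mem_coe.2 (Finset.mem_image_of_mem c hi)))
  have e1 : Module.finrank ℂ (V n) = Module.finrank ℂ (LinearMap.range L) :=
    (LinearMap.finrank_range_of_inj hLinj).symm
  have e2 : Module.finrank ℂ (LinearMap.range L) ≤
      Module.finrank ℂ (Submodule.span ℂ ((s'.image c : Finset (V n)) : Set (V n))) :=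
    Submodule.finrank_mono hrange
  have e3 : Module.finrank ℂ (Submodule.span ℂ ((s'.image c : Finset (V n)) : Set (V n)))
      ≤ (s'.image c).card := finrank_span_finset_le_card (s'.image c)
  have e4 : (s'.image c).card ≤ s'.card := Finset.card_image_le
  have e5 : s'.card = r - I.card := by
    rw [hs', Finset.card_sdiff_of_subset (Finset.subset_univ I), Finset.card_univ, Fintype.card_fin]
  have e6 : I.card ≤ r := by
    have := Finset.card_le_univ I
    simpa using this
  have hNr : 2 ^ n ≤ r - I.card := by
    rw [← e5]
    calc 2 ^ n = Module.finrank ℂ (V n) := finrank_V.symm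
      _ = Module.finrank ℂ (LinearMap.range L) := e1
      _ ≤ _ := e2
      _ ≤ (s'.image c).card := e3
      _ ≤ s'.card := e4
  obtain ⟨N, hNdef⟩ : ∃ N, 2 ^ n = N := ⟨_, rfl⟩
  rw [hNdef] at hN1 hIcard hNr
  rw [pow_succ, hNdef]
  omega

end WnAux

theorem rank_Wn_lower_bound (n : ℕ) (hn : 1 ≤ n) :
    2 ^ (n + 1) - 1 ≤ tRank (Wn n) := by
  classical
  rw [tRank]
  apply le_csInf
  · refine ⟨Fintype.card (Fin n → Fin 3),
      fun j => qb (fun k => decide ((Fintype.equivFin (Fin n → Fin 3)).symm j k = 0)),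
      fun j => qb (fun k => decide ((Fintype.equivFin (Fin n → Fin 3)).symm j k = 1)),
      fun j => qb (fun k => decide ((Fintype.equivFin (Fin n → Fin 3)).symm j k = 2)), ?_⟩
    rw [Wn]
    exact (Equiv.sum_comp (Fintype.equivFin (Fin n → Fin 3)).symm _).symm
  · rintro r ⟨a, b, c, hr⟩
    apply WnAux.main r a b c
    intro x y z
    have h1 := congrArg (WnAux.E x y z) hr
    rw [WnAux.E_Wn, map_sum] at h1
    simp only [WnAux.E_tmul] at h1
    exact h1.symm
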